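/- arXiv:1209.1064 — 4 statements merged into one kernel-verified Lean document; each statement's English description precedes it below -/
import Mathlib

section
/- Let H be an N×p real matrix, y ∈ ℝ^N, and let D be a p×p diagonal matrix with strictly positive diagonal entries. If s ∈ ℝ^p satisfies the fixed-point equation s = (D⁻¹ + I_p)⁻¹ (s + Hᵀ (y − H s)), then s = D Hᵀ (I_N + H D Hᵀ)⁻¹ y. (Both D⁻¹ + I_p and I_N + H D Hᵀ are positive definite, hence invertible.) -/
open Matrix

/-- **Theorem 1 (fixed-point of the MP-EM iteration).**
If `s` satisfies the fixed-point equation `s = (D⁻¹ + I)⁻¹ (s + Hᵀ (y − H s))`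
for a diagonal matrix `D` with strictly positive diagonal entries, then
`s = D Hᵀ (I + H D Hᵀ)⁻¹ y`. -/
theorem em_fixed_point_is_bayes_estimator {N p : ℕ}
    (H : Matrix (Fin N) (Fin p) ℝ) (y : Fin N → ℝ)
    (d : Fin p → ℝ) (hd : ∀ i, 0 < d i) (s : Fin p → ℝ)
    (hfix : s = ((Matrix.diagonal d)⁻¹ + 1)⁻¹ *ᵥ (s + Hᵀ *ᵥ (y - H *ᵥ s))) :
    s = (Matrix.diagonal d * Hᵀ * (1 + H * Matrix.diagonal d * Hᵀ)⁻¹) *ᵥ y := by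
  set D : Matrix (Fin p) (Fin p) ℝ := Matrix.diagonal d with hD
  have hDpd : D.PosDef := Matrix.PosDef.diagonal hd
  have hApd : (D⁻¹ + 1 : Matrix (Fin p) (Fin p) ℝ).PosDef :=
    hDpd.inv.add Matrix.PosDef.one
  -- Step 1: (D⁻¹ + 1) *ᵥ s = s + Hᵀ *ᵥ (y - H *ᵥ s)
  have h1 : (D⁻¹ + 1) *ᵥ s = s + Hᵀ *ᵥ (y - H *ᵥ s) := by
    conv_lhs => rw [hfix]
    rw [Matrix.mulVec_mulVec, Matrix.mul_nonsing_inv _ (Matrix.isUnit_iff_isUnit_det _ |>.1 hApd.isUnit), Matrix.one_mulVec]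
  -- hence D⁻¹ *ᵥ s = Hᵀ *ᵥ (y - H *ᵥ s)
  have h2 : D⁻¹ *ᵥ s = Hᵀ *ᵥ (y - H *ᵥ s) := by
    have := h1
    rw [Matrix.add_mulVec, Matrix.one_mulVec] at this
    have := congrArg (fun v => v - s) this
    simpa [add_sub_cancel_right, add_sub_cancel_left] using this
  -- hence s = D *ᵥ (Hᵀ *ᵥ (y - H *ᵥ s))
  have h3 : s = D *ᵥ (Hᵀ *ᵥ (y - H *ᵥ s)) := by
    rw [← h2, Matrix.mulVec_mulVec, Matrix.mul_nonsing_inv _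
      (Matrix.isUnit_iff_isUnit_det _ |>.1 hDpd.isUnit), Matrix.one_mulVec]
  -- i.e. (1 + D Hᵀ H) *ᵥ s = (D Hᵀ) *ᵥ y
  set B : Matrix (Fin p) (Fin p) ℝ := 1 + D * Hᵀ * H with hB
  have h3' : s = (D * Hᵀ) *ᵥ y - (D * Hᵀ * H) *ᵥ s := by
    conv_lhs => rw [h3]
    simp [Matrix.mulVec_sub, Matrix.mulVec_mulVec, Matrix.mul_assoc]
  have h4 : B *ᵥ s = (D * Hᵀ) *ᵥ y := by
    rw [hB, Matrix.add_mulVec, Matrix.one_mulVec]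
    exact eq_sub_iff_add_eq.mp h3'
  -- M := 1 + H D Hᵀ is positive definite
  set M : Matrix (Fin N) (Fin N) ℝ := 1 + H * D * Hᵀ with hM
  have hHt : Hᴴ = Hᵀ := by simp
  have hMpd : M.PosDef := by
    have := hDpd.posSemidef.mul_mul_conjTranspose_same H
    rw [hHt] at this
    exact Matrix.PosDef.add_posSemidef Matrix.PosDef.one this
  have hMunit := Matrix.isUnit_iff_isUnit_det _ |>.1 hMpd.isUnit
  -- B is invertible: B = D * (D⁻¹ + Hᵀ H)
  have hBunit : IsUnit B := by
    have hfact : B = D * (D⁻¹ + Hᵀ * H) := by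
      rw [hB, mul_add, Matrix.mul_nonsing_inv _
        (Matrix.isUnit_iff_isUnit_det _ |>.1 hDpd.isUnit), Matrix.mul_assoc]
    have hpd2 : (D⁻¹ + Hᵀ * H).PosDef := by
      have hHH : (Hᵀ * H).PosSemidef := by
        have := Matrix.posSemidef_conjTranspose_mul_self H
        rwa [hHt] at this
      exact hDpd.inv.add_posSemidef hHH
    rw [hfact]
    exact hDpd.isUnit.mul hpd2.isUnit
  -- Key matrix identity: B * (D Hᵀ M⁻¹) = D Hᵀ
  have hkey : B * (D * Hᵀ * M⁻¹) = D * Hᵀ := by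
    have hB2 : B * (D * Hᵀ) = D * Hᵀ * M := by
      rw [hB, hM]
      simp only [Matrix.add_mul, Matrix.one_mul, Matrix.mul_add, Matrix.mul_one, Matrix.mul_assoc]
    rw [← Matrix.mul_assoc, hB2, Matrix.mul_assoc, Matrix.mul_nonsing_inv _ hMunit, Matrix.mul_one]
  -- conclude by injectivity of mulVec B
  have hinj : Function.Injective (B.mulVec) :=
    Matrix.mulVec_injective_iff_isUnit.mpr hBunit
  apply hinj
  rw [h4, Matrix.mulVec_mulVec, hkey]
end

section
/- Let H be an N×p real matrix with I_p − Hᵀ H positive semidefinite, σ² > 0, y ∈ ℝ^N, γ² > 0, ε² > 0, and let P : {0,1}^p → (0, ∞). For q ∈ {0,1}^p let D(q) = diag{(γ²)^{q_1}(ε²)^{1−q_1}, …, (γ²)^{q_p}(ε²)^{1−q_p}}, and define F(q, s) = −(‖y − H s‖₂² + sᵀ D(q)⁻¹ s)/(2σ²) + ln P(q) + ½ ln(ε²/γ²) · Σ_{i=1}^p q_i. Given (q⁰, s⁰) ∈ {0,1}^p × ℝ^p, set z = s⁰ + Hᵀ (y − H s⁰) and Q(q, s) = −(‖z − s‖₂²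 + sᵀ D(q)⁻¹ s)/(2σ²) + ln P(q) + ½ ln(ε²/γ²) · Σ_{i=1}^p q_i. If (q¹, s¹) ∈ {0,1}^p × ℝ^p satisfies Q(q¹, s¹) ≥ Q(q⁰, s⁰), then F(q¹, s¹) ≥ F(q⁰, s⁰). -/
open Matrix

/-- Monotonicity of the MP-EM iteration: if the expected complete-data
log-posterior `Q` does not decrease from `(q⁰, s⁰)` to `(q¹, s¹)`, then the
log-posterior `F` does not decrease either. -/
theorem em_monotonicity {N p : ℕ} (H : Matrix (Fin N) (Fin p) ℝ)
    (hH : ((1 : Matrix (Fin p) (Fin p) ℝ) - Hᵀ * H).PosSemidef)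
    (σ2 : ℝ) (hσ : 0 < σ2) (y : Fin N → ℝ)
    (γ2 ε2 : ℝ) (hγ : 0 < γ2) (hε : 0 < ε2)
    (P : (Fin p → Bool) → ℝ) (hP : ∀ q, 0 < P q)
    (D : (Fin p → Bool) → Matrix (Fin p) (Fin p) ℝ)
    (hD : ∀ q, D q = Matrix.diagonal fun i => if q i then γ2 else ε2)
    (F Q : (Fin p → Bool) → (Fin p → ℝ) → ℝ)
    (q0 : Fin p → Bool) (s0 : Fin p → ℝ)
    (z : Fin p → ℝ) (hz : z = s0 + Hᵀ *ᵥ (y - H *ᵥ s0))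
    (hF : ∀ q s, F q s =
        -((∑ i, (y i - (H *ᵥ s) i) ^ 2) + s ⬝ᵥ ((D q)⁻¹ *ᵥ s)) / (2 * σ2)
          + Real.log (P q)
          + (1 / 2) * Real.log (ε2 / γ2) * (∑ i, if q i then (1 : ℝ) else 0))
    (hQ : ∀ q s, Q q s =
        -((∑ i, (z i - s i) ^ 2) + s ⬝ᵥ ((D q)⁻¹ *ᵥ s)) / (2 * σ2)
          + Real.log (P q)
          + (1 / 2) * Real.log (ε2 / γ2) * (∑ i, if q i then (1 : ℝ) else 0))
    (q1 : Fin p → Bool) (s1 : Fin p → ℝ)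
    (h : Q q0 s0 ≤ Q q1 s1) :
    F q0 s0 ≤ F q1 s1 := by
  set e : Fin p → ℝ := s1 - s0 with he
  set r : Fin N → ℝ := y - H *ᵥ s0 with hr
  -- F and Q differ by a term depending only on s
  have hFQ : ∀ q s, F q s = Q q s +
      ((∑ i, (z i - s i) ^ 2) - (∑ i, (y i - (H *ᵥ s) i) ^ 2)) / (2 * σ2) := by
    intro q s
    rw [hF, hQ]
    field_simp
    ring
  -- expansion lemma for squared norms of differences
  have expand : ∀ {n : ℕ} (a b : Fin n → ℝ),
      ∑ i, (a i - b i) ^ 2 = (∑ i, (a i) ^ 2) - 2 * (a ⬝ᵥ b) + ∑ i, (b i) ^ 2 := by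
    intro n a b
    simp only [dotProduct, sub_sq, Finset.sum_add_distrib, Finset.sum_sub_distrib,
      Finset.mul_sum]
    ring_nf
  -- adjoint identity
  have adj : ∀ (u : Fin p → ℝ) (v : Fin N → ℝ),
      u ⬝ᵥ (Hᵀ *ᵥ v) = (H *ᵥ u) ⬝ᵥ v := by
    intro u v
    rw [Matrix.dotProduct_mulVec, Matrix.vecMul_transpose]
  -- pointwise descriptions
  have hz1 : ∀ i, z i - s1 i = (Hᵀ *ᵥ r) i - e i := by
    intro i; simp [hz, he, hr]; ring
  have hz0 : ∀ i, z i - s0 i = (Hᵀ *ᵥ r) i := by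
    intro i; simp [hz, hr]
  have hy1 : ∀ j, y j - (H *ᵥ s1) j = r j - (H *ᵥ e) j := by
    intro j
    have : H *ᵥ s1 = H *ᵥ s0 + H *ᵥ e := by
      rw [← Matrix.mulVec_add]; congr 1; simp [he]
    simp [this, hr]; ring
  have hy0 : ∀ j, y j - (H *ᵥ s0) j = r j := by intro j; simp [hr]
  -- the key quadratic-form identity
  have quad : e ⬝ᵥ (((1 : Matrix (Fin p) (Fin p) ℝ) - Hᵀ * H) *ᵥ e)
      = (∑ i, (e i) ^ 2) - (H *ᵥ e) ⬝ᵥ (H *ᵥ e) := by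
    rw [Matrix.sub_mulVec, dotProduct_sub, Matrix.one_mulVec,
      ← Matrix.mulVec_mulVec, adj]
    congr 1
    simp [dotProduct, sq]
  have key : 0 ≤ e ⬝ᵥ (((1 : Matrix (Fin p) (Fin p) ℝ) - Hᵀ * H) *ᵥ e) := by
    have := hH.dotProduct_mulVec_nonneg e
    simpa using this
  -- difference of the gap terms
  have gap : ((∑ i, (z i - s1 i) ^ 2) - (∑ i, (y i - (H *ᵥ s1) i) ^ 2))
      - ((∑ i, (z i - s0 i) ^ 2) - (∑ i, (y i - (H *ᵥ s0) i) ^ 2))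
      = e ⬝ᵥ (((1 : Matrix (Fin p) (Fin p) ℝ) - Hᵀ * H) *ᵥ e) := by
    have e1 : ∑ i, (z i - s1 i) ^ 2
        = (∑ i, ((Hᵀ *ᵥ r) i) ^ 2) - 2 * ((Hᵀ *ᵥ r) ⬝ᵥ e) + ∑ i, (e i) ^ 2 := by
      simp only [hz1]; exact expand _ _
    have e2 : ∑ j, (y j - (H *ᵥ s1) j) ^ 2
        = (∑ j, (r j) ^ 2) - 2 * (r ⬝ᵥ (H *ᵥ e)) + (H *ᵥ e) ⬝ᵥ (H *ᵥ e) := by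
      simp only [hy1]
      rw [expand r (H *ᵥ e)]
      congr 1
      simp [dotProduct, sq]
    have e3 : ∑ i, (z i - s0 i) ^ 2 = ∑ i, ((Hᵀ *ᵥ r) i) ^ 2 := by
      simp only [hz0]
    have e4 : ∑ j, (y j - (H *ᵥ s0) j) ^ 2 = ∑ j, (r j) ^ 2 := by
      simp only [hy0]
    have cross : (Hᵀ *ᵥ r) ⬝ᵥ e = r ⬝ᵥ (H *ᵥ e) := by
      rw [dotProduct_comm, adj, dotProduct_comm]
    rw [e1, e2, e3, e4, quad, cross]
    ring
  -- conclude
  have hpos : (0:ℝ) < 2 * σ2 := by linarith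
  have hdiv : 0 ≤ (((∑ i, (z i - s1 i) ^ 2) - (∑ i, (y i - (H *ᵥ s1) i) ^ 2))
      - ((∑ i, (z i - s0 i) ^ 2) - (∑ i, (y i - (H *ᵥ s0) i) ^ 2))) / (2 * σ2) := by
    rw [gap]; exact div_nonneg key (le_of_lt hpos)
  have := hFQ q1 s1
  have := hFQ q0 s0
  rw [hFQ q1 s1, hFQ q0 s0]
  have : (((∑ i, (z i - s0 i) ^ 2) - (∑ i, (y i - (H *ᵥ s0) i) ^ 2))) / (2 * σ2)
      ≤ (((∑ i, (z i - s1 i) ^ 2) - (∑ i, (y i - (H *ᵥ s1) i) ^ 2))) / (2 * σ2) := by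
    rw [div_le_div_iff₀ hpos hpos]
    nlinarith [hdiv, hpos]
  linarith
end

section
/- Let H be an N×p real matrix whose spectral norm (largest singular value) is strictly less than 1, let σ² > 0, y ∈ ℝ^N, s ∈ ℝ^p, and set C = σ² (I_N − H Hᵀ). Then C, Hᵀ C⁻¹ H + σ⁻² I_p, I_N − HHᵀ, and I_p − HᵀH are invertible, and (Hᵀ C⁻¹ H + σ⁻² I_p)⁻¹ (Hᵀ C⁻¹ y + σ⁻² s) = s + Hᵀ (y − H s). -/
open Matrix

/-- If the spectral norm of `H` is strictly less than 1 (i.e. `‖Hx‖₂ < ‖x‖₂`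
for all `x ≠ 0`), then with `C = σ²(I_N − HHᵀ)` all the matrices `C`,
`HᵀC⁻¹H + σ⁻²I_p`, `I_N − HHᵀ`, `I_p − HᵀH` are invertible, and the
conditional missing-data mean simplifies to the backprojection form:
`(HᵀC⁻¹H + σ⁻²I_p)⁻¹ (HᵀC⁻¹y + σ⁻²s) = s + Hᵀ(y − Hs)`. -/
theorem missing_data_mean_backprojection {N p : ℕ}
    (H : Matrix (Fin N) (Fin p) ℝ)
    (hH : ∀ x : Fin p → ℝ, x ≠ 0 → ∑ i, ((H *ᵥ x) i) ^ 2 < ∑ j, (x j) ^ 2)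
    (σ2 : ℝ) (hσ : 0 < σ2) (y : Fin N → ℝ) (s : Fin p → ℝ)
    (C : Matrix (Fin N) (Fin N) ℝ)
    (hC : C = σ2 • ((1 : Matrix (Fin N) (Fin N) ℝ) - H * Hᵀ)) :
    IsUnit C
      ∧ IsUnit (Hᵀ * C⁻¹ * H + σ2⁻¹ • (1 : Matrix (Fin p) (Fin p) ℝ))
      ∧ IsUnit ((1 : Matrix (Fin N) (Fin N) ℝ) - H * Hᵀ)
      ∧ IsUnit ((1 : Matrix (Fin p) (Fin p) ℝ) - Hᵀ * H)
      ∧ (Hᵀ * C⁻¹ * H + σ2⁻¹ • (1 : Matrix (Fin p) (Fin p) ℝ))⁻¹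
          *ᵥ (Hᵀ *ᵥ (C⁻¹ *ᵥ y) + σ2⁻¹ • s)
        = s + Hᵀ *ᵥ (y - H *ᵥ s) := by
  set A : Matrix (Fin p) (Fin p) ℝ := (1 : Matrix (Fin p) (Fin p) ℝ) - Hᵀ * H with hAdef
  set B : Matrix (Fin N) (Fin N) ℝ := (1 : Matrix (Fin N) (Fin N) ℝ) - H * Hᵀ with hBdef
  -- A is positive definite
  have hApos : A.PosDef := by
    refine posDef_iff_dotProduct_mulVec.mpr ⟨?_, ?_⟩
    · have h1 : (Hᵀ * H).IsHermitian := by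
        have := isHermitian_conjTranspose_mul_self H
        simpa using this
      simpa [hAdef] using (isHermitian_one (n := Fin p) (α := ℝ)).sub h1
    · intro x hx
      have key := hH x hx
      have hd : star x ⬝ᵥ (A *ᵥ x) = ∑ j, (x j) ^ 2 - ∑ i, ((H *ᵥ x) i) ^ 2 := by
        simp only [hAdef, sub_mulVec, one_mulVec, dotProduct_sub, star_trivial]
        have h2 : x ⬝ᵥ ((Hᵀ * H) *ᵥ x) = (H *ᵥ x) ⬝ᵥ (H *ᵥ x) := by
          rw [← mulVec_mulVec, dotProduct_mulVec, vecMul_transpose]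
        rw [h2]
        simp [dotProduct, sq]
      rw [hd] at *
      simpa [hd] using sub_pos.mpr key
  have hAdet : IsUnit A.det := isUnit_iff_ne_zero.mpr (ne_of_gt hApos.det_pos)
  have hA : IsUnit A := (isUnit_iff_isUnit_det A).mpr hAdet
  have hBdet : IsUnit B.det := by
    have : B.det = A.det := by
      rw [hAdef, hBdef, det_one_sub_mul_comm]
    rwa [this]
  have hB : IsUnit B := (isUnit_iff_isUnit_det B).mpr hBdet
  have hσ0 : σ2 ≠ 0 := ne_of_gt hσ
  -- C is invertible
  have hCdet : IsUnit C.det := by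
    rw [hC, det_smul]
    exact (IsUnit.pow _ (isUnit_iff_ne_zero.mpr hσ0)).mul hBdet
  have hCu : IsUnit C := (isUnit_iff_isUnit_det C).mpr hCdet
  -- inverse of C
  have hCinv : C⁻¹ = σ2⁻¹ • B⁻¹ := by
    apply inv_eq_right_inv
    rw [hC, smul_mul_smul_comm, mul_nonsing_inv _ hBdet]
    simp [hσ0]
  -- key commutation: A * Hᵀ = Hᵀ * B
  have hcomm : A * Hᵀ = Hᵀ * B := by
    rw [hAdef, hBdef, Matrix.sub_mul, Matrix.mul_sub, Matrix.one_mul, Matrix.mul_one, Matrix.mul_assoc]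
  have hHB : Hᵀ * B⁻¹ = A⁻¹ * Hᵀ := by
    have h1 : A * (Hᵀ * B⁻¹) = A * (A⁻¹ * Hᵀ) := by
      rw [← Matrix.mul_assoc, hcomm, Matrix.mul_assoc, mul_nonsing_inv _ hBdet,
        ← Matrix.mul_assoc, mul_nonsing_inv _ hAdet, Matrix.mul_one, Matrix.one_mul]
    calc Hᵀ * B⁻¹ = (A⁻¹ * A) * (Hᵀ * B⁻¹) := by
          rw [nonsing_inv_mul _ hAdet, Matrix.one_mul]
      _ = (A⁻¹ * A) * (A⁻¹ * Hᵀ) := by rw [Matrix.mul_assoc, h1, ← Matrix.mul_assoc]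
      _ = A⁻¹ * Hᵀ := by rw [nonsing_inv_mul _ hAdet, Matrix.one_mul]
  -- the matrix T
  have hT : Hᵀ * C⁻¹ * H + σ2⁻¹ • (1 : Matrix (Fin p) (Fin p) ℝ) = σ2⁻¹ • A⁻¹ := by
    rw [hCinv, Matrix.mul_smul, Matrix.smul_mul, ← smul_add]
    congr 1
    rw [hHB, Matrix.mul_assoc]
    calc A⁻¹ * (Hᵀ * H) + 1
        = A⁻¹ * (Hᵀ * H) + A⁻¹ * A := by rw [nonsing_inv_mul _ hAdet]
      _ = A⁻¹ * (Hᵀ * H + A) := by rw [Matrix.mul_add]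
      _ = A⁻¹ * 1 := by rw [hAdef, add_sub_cancel]
      _ = A⁻¹ := Matrix.mul_one _
  have hTu : IsUnit (Hᵀ * C⁻¹ * H + σ2⁻¹ • (1 : Matrix (Fin p) (Fin p) ℝ)) := by
    rw [hT]
    apply (isUnit_iff_isUnit_det _).mpr
    rw [det_smul, det_nonsing_inv]
    refine ((isUnit_iff_ne_zero.mpr (inv_ne_zero hσ0)).pow _).mul ?_
    rw [Ring.inverse_eq_inv']
    exact hAdet.inv
  have hTinv : (Hᵀ * C⁻¹ * H + σ2⁻¹ • (1 : Matrix (Fin p) (Fin p) ℝ))⁻¹ = σ2 • A := by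
    apply inv_eq_right_inv
    rw [hT, smul_mul_smul_comm, nonsing_inv_mul _ hAdet]
    simp [hσ0]
  refine ⟨hCu, hTu, hB, hA, ?_⟩
  rw [hTinv, hCinv]
  have step1 : Hᵀ *ᵥ ((σ2⁻¹ • B⁻¹) *ᵥ y) = σ2⁻¹ • (A⁻¹ *ᵥ (Hᵀ *ᵥ y)) := by
    rw [smul_mulVec, mulVec_smul, mulVec_mulVec, hHB, ← mulVec_mulVec]
  rw [step1, ← smul_add, mulVec_smul, smul_mulVec, smul_smul,
    inv_mul_cancel₀ hσ0, one_smul, mulVec_add, mulVec_mulVec,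
    mul_nonsing_inv _ hAdet, one_mulVec, hAdef, sub_mulVec, one_mulVec,
    mulVec_sub, ← mulVec_mulVec]
  abel
end

section
/- Let z ∈ ℝ, σ² > 0, ε = √(ε²) > 0, γ = √(γ²) > 0, and let w₀ ≥ 0 and w₁ ≥ 0. Then the supremum over (q, s) ∈ {0,1} × ℝ of N(z | s, σ²) · [w₁ · N(s | 0, γ² σ²)]^q · [w₀ · N(s | 0, ε² σ²)]^{1−q}, where N(x | μ, v) = (2πv)^{−1/2} exp(−(x−μ)²/(2v)), equals (2πσ²)⁻¹ · max{ (w₀/ε) · exp(−z²/(2σ²(1 + ε²))), (w₁/γ) · exp(−z²/(2σ²(1 + γ²))) }. -/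
/-- The univariate Gaussian pdf `N(x | μ, v) = (2πv)^{−1/2} exp(−(x−μ)²/(2v))`. -/
noncomputable def gaussPdf (x μ v : ℝ) : ℝ :=
  (Real.sqrt (2 * Real.pi * v))⁻¹ * Real.exp (-(x - μ) ^ 2 / (2 * v))

lemma gauss_prod (z σ2 t w : ℝ) (hσ : 0 < σ2) (ht : 0 < t) (hw : 0 ≤ w) (s : ℝ) :
    gaussPdf z s σ2 * (w * gaussPdf s 0 (t ^ 2 * σ2)) =
      (2 * Real.pi * σ2)⁻¹ * (w / t) *
        (Real.exp (-(1 + t ^ 2) * (s - t ^ 2 * z / (1 + t ^ 2)) ^ 2 / (2 * t ^ 2 * σ2)) *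
         Real.exp (-z ^ 2 / (2 * σ2 * (1 + t ^ 2)))) := by
  have hπ : 0 < 2 * Real.pi * σ2 := by positivity
  have h1 : Real.sqrt (2 * Real.pi * σ2) * Real.sqrt (2 * Real.pi * (t ^ 2 * σ2))
      = 2 * Real.pi * σ2 * t := by
    rw [← Real.sqrt_mul hπ.le]
    have : 2 * Real.pi * σ2 * (2 * Real.pi * (t ^ 2 * σ2)) = (2 * Real.pi * σ2 * t) ^ 2 := by
      ring
    rw [this, Real.sqrt_sq (by positivity)]
  have ht2 : (1:ℝ) + t ^ 2 ≠ 0 := by positivity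
  unfold gaussPdf
  have hexp : -(z - s) ^ 2 / (2 * σ2) + -(s - 0) ^ 2 / (2 * (t ^ 2 * σ2)) =
      -(1 + t ^ 2) * (s - t ^ 2 * z / (1 + t ^ 2)) ^ 2 / (2 * t ^ 2 * σ2) +
      -z ^ 2 / (2 * σ2 * (1 + t ^ 2)) := by
    field_simp
    ring
  rw [← Real.exp_add, ← hexp, Real.exp_add]
  rw [show (Real.sqrt (2 * Real.pi * σ2))⁻¹ * Real.exp (-(z - s) ^ 2 / (2 * σ2)) *
      (w * ((Real.sqrt (2 * Real.pi * (t ^ 2 * σ2)))⁻¹ * Real.exp (-(s - 0) ^ 2 / (2 * (t ^ 2 * σ2))))) =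
      (Real.sqrt (2 * Real.pi * σ2) * Real.sqrt (2 * Real.pi * (t ^ 2 * σ2)))⁻¹ * w *
      (Real.exp (-(z - s) ^ 2 / (2 * σ2)) * Real.exp (-(s - 0) ^ 2 / (2 * (t ^ 2 * σ2)))) from by
    rw [mul_inv]; ring, h1, mul_inv, div_eq_mul_inv]
  ring

lemma aux (z σ2 t w : ℝ) (hσ : 0 < σ2) (ht : 0 < t) (hw : 0 ≤ w) :
    IsGreatest (Set.range fun s : ℝ => gaussPdf z s σ2 * (w * gaussPdf s 0 (t ^ 2 * σ2)))
      ((2 * Real.pi * σ2)⁻¹ * (w / t * Real.exp (-z ^ 2 / (2 * σ2 * (1 + t ^ 2))))) := by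
  constructor
  · refine ⟨t ^ 2 * z / (1 + t ^ 2), ?_⟩
    dsimp only
    rw [gauss_prod z σ2 t w hσ ht hw]
    simp [mul_assoc]
  · rintro y ⟨s, rfl⟩
    dsimp only
    rw [gauss_prod z σ2 t w hσ ht hw]
    have h1 : Real.exp (-(1 + t ^ 2) * (s - t ^ 2 * z / (1 + t ^ 2)) ^ 2 / (2 * t ^ 2 * σ2)) ≤ 1 := by
      apply Real.exp_le_one_iff.mpr
      have hnum : -(1 + t ^ 2) * (s - t ^ 2 * z / (1 + t ^ 2)) ^ 2 ≤ 0 := by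
        nlinarith [sq_nonneg (s - t ^ 2 * z / (1 + t ^ 2))]
      exact div_nonpos_of_nonpos_of_nonneg hnum (by positivity)
    have hpref : 0 ≤ (2 * Real.pi * σ2)⁻¹ * (w / t) := by positivity
    calc (2 * Real.pi * σ2)⁻¹ * (w / t) * (Real.exp (-(1 + t ^ 2) * (s - t ^ 2 * z / (1 + t ^ 2)) ^ 2 / (2 * t ^ 2 * σ2)) * Real.exp (-z ^ 2 / (2 * σ2 * (1 + t ^ 2))))
        ≤ (2 * Real.pi * σ2)⁻¹ * (w / t) * (1 * Real.exp (-z ^ 2 / (2 * σ2 * (1 + t ^ 2)))) := by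
          apply mul_le_mul_of_nonneg_left _ hpref
          exact mul_le_mul_of_nonneg_right h1 (Real.exp_pos _).le
      _ = (2 * Real.pi * σ2)⁻¹ * (w / t * Real.exp (-z ^ 2 / (2 * σ2 * (1 + t ^ 2)))) := by ring

/-- Closed form of the max-product messages: the supremum over
`(q, s) ∈ {0,1} × ℝ` of `N(z|s,σ²)·[w₁N(s|0,γ²σ²)]^q·[w₀N(s|0,ε²σ²)]^{1−q}`
equals `(2πσ²)⁻¹ max{(w₀/ε)exp(−z²/(2σ²(1+ε²))), (w₁/γ)exp(−z²/(2σ²(1+γ²)))}`. -/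
theorem max_product_message_value (z σ2 ε γ w0 w1 : ℝ)
    (hσ : 0 < σ2) (hε : 0 < ε) (hγ : 0 < γ) (hw0 : 0 ≤ w0) (hw1 : 0 ≤ w1) :
    IsGreatest
      (Set.range fun x : Bool × ℝ =>
        gaussPdf z x.2 σ2 *
          (if x.1 then w1 * gaussPdf x.2 0 (γ ^ 2 * σ2)
           else w0 * gaussPdf x.2 0 (ε ^ 2 * σ2)))
      ((2 * Real.pi * σ2)⁻¹ *
        max (w0 / ε * Real.exp (-z ^ 2 / (2 * σ2 * (1 + ε ^ 2))))
            (w1 / γ * Real.exp (-z ^ 2 / (2 * σ2 * (1 + γ ^ 2))))) := by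
  have h0 := aux z σ2 ε w0 hσ hε hw0
  have h1 := aux z σ2 γ w1 hσ hγ hw1
  set M0 := w0 / ε * Real.exp (-z ^ 2 / (2 * σ2 * (1 + ε ^ 2))) with hM0
  set M1 := w1 / γ * Real.exp (-z ^ 2 / (2 * σ2 * (1 + γ ^ 2))) with hM1
  have hπ : (0:ℝ) ≤ (2 * Real.pi * σ2)⁻¹ := by positivity
  constructor
  · rcases le_total M0 M1 with h | h
    · rw [max_eq_right h]
      obtain ⟨s, hs⟩ := h1.1
      exact ⟨(true, s), by simpa using hs⟩
    · rw [max_eq_left h]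
      obtain ⟨s, hs⟩ := h0.1
      exact ⟨(false, s), by simpa using hs⟩
  · rintro y ⟨⟨q, s⟩, rfl⟩
    cases q
    · simp only [if_neg Bool.false_ne_true]
      calc gaussPdf z s σ2 * (w0 * gaussPdf s 0 (ε ^ 2 * σ2))
          ≤ (2 * Real.pi * σ2)⁻¹ * M0 := h0.2 ⟨s, rfl⟩
        _ ≤ _ := mul_le_mul_of_nonneg_left (le_max_left _ _) hπ
    · simp only [if_pos rfl]
      calc gaussPdf z s σ2 * (w1 * gaussPdf s 0 (γ ^ 2 * σ2))
          ≤ (2 * Real.pi * σ2)⁻¹ * M1 := h1.2 ⟨s, rfl⟩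
        _ ≤ _ := mul_le_mul_of_nonneg_left (le_max_right _ _) hπ
end
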